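/- arXiv:2006.02092 — 4 statements merged into one kernel-verified Lean document; each statement's English description precedes it below -/
import Mathlib

section
/- Let Ω ⊆ V be a transitive state space. Then there exists a unique state ω_M ∈ Ω (the maximally mixed state) such that T ω_M = ω_M for every T ∈ GL(Ω). Moreover, if Ω has only finitely many extreme points ω₁, …, ω_n, then ω_M = (1/n) • ∑_{i=1}^{n} ωᵢ. -/
open RealInnerProductSpace

variable {V : Type*} [NormedAddCommGroup V] [InnerProductSpace ℝ V] [FiniteDimensional ℝ V]

/-- A state space: nonempty compact convex set whose affine hull misses `0` and has
dimension `dim V - 1` (so it spans `V`). -/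
def IsStateSpace (Ω : Set V) : Prop :=
  Ω.Nonempty ∧ IsCompact Ω ∧ Convex ℝ Ω ∧ (0 : V) ∉ affineSpan ℝ Ω ∧
    Module.finrank ℝ (vectorSpan ℝ Ω) + 1 = Module.finrank ℝ V

/-- The group `GL(Ω)` of linear bijections preserving `Ω`. -/
def autGroup (Ω : Set V) : Set (V ≃ₗ[ℝ] V) := {T | T '' Ω = Ω}

/-- Transitivity of the action of `GL(Ω)` on the extreme points of `Ω`. -/
def IsTransitive (Ω : Set V) : Prop :=
  ∀ ω₁ ∈ Set.extremePoints ℝ Ω, ∀ ω₂ ∈ Set.extremePoints ℝ Ω,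
    ∃ T ∈ autGroup Ω, T ω₁ = ω₂

/-- The inner product of `V` is invariant under `GL(Ω)`. -/
def InvariantInner (Ω : Set V) : Prop :=
  ∀ T ∈ autGroup Ω, ∀ x y : V, ⟪T x, T y⟫ = ⟪x, y⟫

/-- The positive cone generated by `Ω`. -/
def posCone (Ω : Set V) : Set V := {x | ∃ l : ℝ, ∃ ω ∈ Ω, 0 ≤ l ∧ x = l • ω}

/-- Self-duality of the positive cone with respect to the inner product of `V`. -/
def SelfDualCone (Ω : Set V) : Prop :=
  posCone Ω = {y | ∀ x ∈ posCone Ω, 0 ≤ ⟪x, y⟫}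

/-- An effect on `Ω`. -/
def IsEffect (Ω : Set V) (e : V) : Prop := ∀ ω ∈ Ω, 0 ≤ ⟪e, ω⟫ ∧ ⟪e, ω⟫ ≤ 1

/-- A measurement with outcome set `A`: a family of nonzero effects summing to the
unit effect `ωM`. -/
def IsMeasurement (Ω : Set V) (ωM : V) {A : Type*} [Fintype A] (f : A → V) : Prop :=
  (∀ a, f a ≠ 0 ∧ IsEffect Ω (f a)) ∧ ∑ a, f a = ωM

/-- An ideal measurement. -/
def IsIdeal (Ω : Set V) (ωM : V) {A : Type*} [Fintype A] (f : A → V) : Prop :=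
  IsMeasurement Ω ωM f ∧
    ∃ c : ℝ, 0 < c ∧ (∀ ω ∈ Set.extremePoints ℝ Ω, ‖ω‖ = c) ∧
      ∀ a, ∃ S : Finset V, ↑S ⊆ Set.extremePoints ℝ Ω ∧
        (f a = (c ^ 2)⁻¹ • ∑ ω' ∈ S, ω' ∨ f a = ωM - (c ^ 2)⁻¹ • ∑ ω' ∈ S, ω')

/-- First marginal of a joint measurement. -/
def margF {A B : Type*} [Fintype B] (m : A × B → V) : A → V := fun a => ∑ b, m (a, b)

/-- Second marginal of a joint measurement. -/
def margG {A B : Type*} [Fintype A] (m : A × B → V) : B → V := fun b => ∑ a, m (a, b)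

open Classical in
/-- `∑_{a' : d(a',a) ≤ w/2} ⟪f a', ω⟫`. -/
noncomputable def ballSum {A : Type*} [Fintype A] [MetricSpace A]
    (f : A → V) (ω : V) (a : A) (w : ℝ) : ℝ :=
  ∑ a' ∈ Finset.univ.filter (fun x => dist x a ≤ w / 2), ⟪f a', ω⟫

/-- Overall width of the distribution of `f` on `ω` at confidence level `1 - ε`. -/
noncomputable def overallWidth {A : Type*} [Fintype A] [MetricSpace A]
    (f : A → V) (ω : V) (ε : ℝ) : ℝ :=
  sInf {w : ℝ | 0 < w ∧ ∃ a : A, 1 - ε ≤ ballSum f ω a w}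

/-- Error bar width of `ft` relative to `f`. -/
noncomputable def errorBarWidth (Ω : Set V) {A : Type*} [Fintype A] [MetricSpace A]
    (ft f : A → V) (ε : ℝ) : ℝ :=
  sInf {w : ℝ | 0 < w ∧ ∀ a : A, ∀ ω ∈ Ω, ⟪f a, ω⟫ = 1 → 1 - ε ≤ ballSum ft ω a w}

/-- Werner's measure `D_W(ft, f)`. -/
noncomputable def wernerD (Ω : Set V) {A : Type*} [Fintype A] [MetricSpace A]
    (ft f : A → V) : ℝ :=
  sSup {d : ℝ | ∃ ω ∈ Ω, ∃ h : A → ℝ, (∀ a₁ a₂ : A, |h a₁ - h a₂| ≤ dist a₁ a₂) ∧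
    d = |∑ a, h a * (⟪ft a, ω⟫ - ⟪f a, ω⟫)|}

/-- `l∞` distance `D_∞(ft, f)`. -/
noncomputable def dInfty (Ω : Set V) {A : Type*} (ft f : A → V) : ℝ :=
  sSup {d : ℝ | ∃ ω ∈ Ω, ∃ a : A, d = |⟪ft a, ω⟫ - ⟪f a, ω⟫|}

/-- Minimum localization error `LE(ω^F)`. -/
noncomputable def locError {A : Type*} [Fintype A] [Nonempty A] (f : A → V) (ω : V) : ℝ :=
  1 - Finset.univ.sup' Finset.univ_nonempty (fun a => ⟪f a, ω⟫)


lemma MaxMix.span_eq_top {Ω : Set V} (hΩ : IsStateSpace Ω) :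
    Submodule.span ℝ Ω = ⊤ := by
  obtain ⟨⟨ω₀, hω₀⟩, hcomp, hconv, h0, hdim⟩ := hΩ
  have hω₀vs : ω₀ ∉ vectorSpan ℝ Ω := by
    intro h
    apply h0
    have h1 : ω₀ ∈ affineSpan ℝ Ω := subset_affineSpan ℝ Ω hω₀
    have h2 : (-ω₀) ∈ (affineSpan ℝ Ω).direction := by
      rw [direction_affineSpan]; exact neg_mem h
    have := AffineSubspace.vadd_mem_of_mem_direction h2 h1
    simpa using this
  have hle : vectorSpan ℝ Ω ≤ Submodule.span ℝ Ω := by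
    rw [vectorSpan_def]
    apply Submodule.span_le.2
    rintro x ⟨a, ha, b, hb, rfl⟩
    exact sub_mem (Submodule.subset_span ha) (Submodule.subset_span hb)
  have hlt : vectorSpan ℝ Ω < Submodule.span ℝ Ω := by
    refine lt_of_le_of_ne hle fun h => hω₀vs ?_
    rw [h]; exact Submodule.subset_span hω₀
  have h1 : Module.finrank ℝ (vectorSpan ℝ Ω) < Module.finrank ℝ (Submodule.span ℝ Ω) :=
    Submodule.finrank_lt_finrank_of_lt hlt
  have h2 : Module.finrank ℝ (Submodule.span ℝ Ω) ≤ Module.finrank ℝ V :=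
    Submodule.finrank_le _
  exact Submodule.eq_top_of_finrank_eq (le_antisymm h2 (by omega))

lemma MaxMix.exists_bound {Ω : Set V} (hΩ : IsStateSpace Ω) :
    ∃ C : ℝ, 0 ≤ C ∧ ∀ A : V →L[ℝ] V, (∀ ω ∈ Ω, A ω ∈ Ω) → ‖A‖ ≤ C := by
  classical
  obtain ⟨R, hR⟩ := (isBounded_iff_forall_norm_le.1 hΩ.2.1.isBounded)
  obtain ⟨ω₀, hω₀⟩ := hΩ.1
  have hR0 : 0 ≤ R := le_trans (norm_nonneg ω₀) (hR ω₀ hω₀)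
  obtain ⟨b, hbΩ, hbspan, hbli⟩ := exists_linearIndependent ℝ Ω
  have hspan : Submodule.span ℝ b = ⊤ := hbspan.trans (MaxMix.span_eq_top hΩ)
  haveI : Fintype b := (hbli.setFinite).fintype
  let B : Module.Basis b ℝ V := Module.Basis.mk hbli (by rw [Subtype.range_coe]; exact hspan.ge)
  let coordCLM : b → (V →L[ℝ] ℝ) := fun i => LinearMap.toContinuousLinearMap (B.coord i)
  refine ⟨∑ i, ‖coordCLM i‖ * R, Finset.sum_nonneg fun i _ =>
    mul_nonneg (norm_nonneg _) hR0, fun A hA => ?_⟩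
  apply ContinuousLinearMap.opNorm_le_bound _ (Finset.sum_nonneg fun i _ =>
    mul_nonneg (norm_nonneg _) hR0)
  intro x
  have hx : A x = ∑ i, B.repr x i • A (B i) := by
    conv_lhs => rw [← B.sum_repr x]
    rw [map_sum]
    simp [map_smul]
  rw [hx, Finset.sum_mul]
  refine le_trans (norm_sum_le _ _) (Finset.sum_le_sum fun i _ => ?_)
  rw [norm_smul]
  have h1 : ‖A (B i)‖ ≤ R := by
    apply hR
    apply hA
    have : (B i : V) = (i : V) := by simp [B]
    rw [this]; exact hbΩ i.2
  have h2 : ‖B.repr x i‖ ≤ ‖coordCLM i‖ * ‖x‖ := by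
    have : B.repr x i = coordCLM i x := by simp [coordCLM, B.coord_apply]
    rw [this]; exact (coordCLM i).le_opNorm x
  calc ‖B.repr x i‖ * ‖A (B i)‖ ≤ (‖coordCLM i‖ * ‖x‖) * R :=
        mul_le_mul h2 h1 (norm_nonneg _) (by positivity)
    _ = ‖coordCLM i‖ * R * ‖x‖ := by ring

/-- The subgroup of units of `V →L[ℝ] V` preserving `Ω`. -/
def MaxMix.Hgrp (Ω : Set V) : Subgroup (V →L[ℝ] V)ˣ where
  carrier := {u | ((u : V →L[ℝ] V) : V → V) '' Ω = Ω}
  one_mem' := by simp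
  mul_mem' := by
    intro a b ha hb
    show (((a * b : (V →L[ℝ] V)ˣ) : V →L[ℝ] V) : V → V) '' Ω = Ω
    have h : (((a * b : (V →L[ℝ] V)ˣ) : V →L[ℝ] V) : V → V)
        = ((a : V →L[ℝ] V) : V → V) ∘ ((b : V →L[ℝ] V) : V → V) := by
      ext x; simp [Units.val_mul, ContinuousLinearMap.mul_apply]
    rw [h, Set.image_comp, hb, ha]
  inv_mem' := by
    intro u hu
    show (((u⁻¹ : (V →L[ℝ] V)ˣ) : V →L[ℝ] V) : V → V) '' Ω = Ω
    conv_lhs => rw [← hu]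
    rw [← Set.image_comp]
    have h : (((u⁻¹ : (V →L[ℝ] V)ˣ) : V →L[ℝ] V) : V → V) ∘ ((u : V →L[ℝ] V) : V → V)
        = id := by
      ext x
      show ((u⁻¹ : (V →L[ℝ] V)ˣ) : V →L[ℝ] V) ((u : V →L[ℝ] V) x) = x
      calc ((u⁻¹ : (V →L[ℝ] V)ˣ) : V →L[ℝ] V) (((u : (V →L[ℝ] V)ˣ) : V →L[ℝ] V) x)
          = (((u⁻¹ : (V →L[ℝ] V)ˣ) : V →L[ℝ] V) * ((u : (V →L[ℝ] V)ˣ) : V →L[ℝ] V)) x := rfl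
        _ = x := by rw [u.inv_mul]; rfl
    rw [h, Set.image_id]

lemma MaxMix.isCompact_Hgrp {Ω : Set V} (hΩ : IsStateSpace Ω) :
    IsCompact ((MaxMix.Hgrp Ω : Set (V →L[ℝ] V)ˣ)) := by
  classical
  obtain ⟨C, hC0, hC⟩ := MaxMix.exists_bound hΩ
  have hΩcl : IsClosed Ω := hΩ.2.1.isClosed
  rw [Units.isEmbedding_embedProduct.isCompact_iff]
  set M := V →L[ℝ] V with hMdef
  let K : Set (M × M) := {p | (∀ ω ∈ Ω, p.1 ω ∈ Ω) ∧ (∀ ω ∈ Ω, p.2 ω ∈ Ω) ∧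
    p.1 * p.2 = 1 ∧ p.2 * p.1 = 1}
  have hKc : IsClosed K := by
    have c1 : IsClosed {p : M × M | ∀ ω ∈ Ω, p.1 ω ∈ Ω} := by
      have he : {p : M × M | ∀ ω ∈ Ω, p.1 ω ∈ Ω} = ⋂ ω ∈ Ω, {p : M × M | p.1 ω ∈ Ω} := by
        ext p; simp
      rw [he]
      refine isClosed_biInter fun ω hω => IsClosed.preimage ?_ hΩcl
      exact (ContinuousLinearMap.apply ℝ V ω).continuous.comp continuous_fst
    have c2 : IsClosed {p : M × M | ∀ ω ∈ Ω, p.2 ω ∈ Ω} := by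
      have he : {p : M × M | ∀ ω ∈ Ω, p.2 ω ∈ Ω} = ⋂ ω ∈ Ω, {p : M × M | p.2 ω ∈ Ω} := by
        ext p; simp
      rw [he]
      refine isClosed_biInter fun ω hω => IsClosed.preimage ?_ hΩcl
      exact (ContinuousLinearMap.apply ℝ V ω).continuous.comp continuous_snd
    have c3 : IsClosed {p : M × M | p.1 * p.2 = 1} :=
      isClosed_eq (continuous_fst.mul continuous_snd) continuous_const
    have c4 : IsClosed {p : M × M | p.2 * p.1 = 1} :=
      isClosed_eq (continuous_snd.mul continuous_fst) continuous_const
    exact c1.inter (c2.inter (c3.inter c4))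
  have hKsub : K ⊆ Metric.closedBall 0 C ×ˢ Metric.closedBall 0 C := by
    rintro ⟨p1, p2⟩ ⟨h1, h2, -, -⟩
    constructor <;> simp only [Metric.mem_closedBall, dist_zero_right]
    · exact hC p1 h1
    · exact hC p2 h2
  have hK : IsCompact K :=
    ((isCompact_closedBall (0 : M) C).prod (isCompact_closedBall (0 : M) C)).of_isClosed_subset
      hKc hKsub
  have himg : Units.embedProduct M '' (MaxMix.Hgrp Ω : Set Mˣ)
      = (fun p : M × M => (p.1, MulOpposite.op p.2)) '' K := by
    ext q
    constructor
    · rintro ⟨u, hu, rfl⟩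
      have huinv : (((u⁻¹ : Mˣ) : M) : V → V) '' Ω = Ω := (MaxMix.Hgrp Ω).inv_mem hu
      refine ⟨((u : M), ((u⁻¹ : Mˣ) : M)), ⟨?_, ?_, ?_, ?_⟩, rfl⟩
      · intro ω hω; rw [← hu]; exact Set.mem_image_of_mem _ hω
      · intro ω hω; rw [← huinv]; exact Set.mem_image_of_mem _ hω
      · exact u.mul_inv
      · exact u.inv_mul
    · rintro ⟨⟨p1, p2⟩, ⟨h1, h2, h3, h4⟩, rfl⟩
      refine ⟨⟨p1, p2, h3, h4⟩, ?_, rfl⟩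
      show ((p1 : M) : V → V) '' Ω = Ω
      apply Set.Subset.antisymm
      · rintro x ⟨ω, hω, rfl⟩; exact h1 ω hω
      · intro ω hω
        refine ⟨p2 ω, h2 ω hω, ?_⟩
        have : p1 (p2 ω) = (p1 * p2) ω := rfl
        rw [this, h3]; rfl
  rw [himg]
  exact hK.image (continuous_fst.prodMk (MulOpposite.continuous_op.comp continuous_snd))

namespace MaxMix

open MeasureTheory

theorem main
    {V : Type*} [NormedAddCommGroup V] [InnerProductSpace ℝ V] [FiniteDimensional ℝ V]
    {Ω : Set V} (hΩ : IsStateSpace Ω) (htrans : IsTransitive Ω) :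
    ∃ ωM ∈ Ω, (∀ T ∈ autGroup Ω, T ωM = ωM) ∧
      (∀ ω' ∈ Ω, (∀ T ∈ autGroup Ω, T ω' = ω') → ω' = ωM) ∧
      (∀ (n : ℕ) (e : Fin n → V), Function.Injective e →
        Set.extremePoints ℝ Ω = Set.range e → ωM = (n : ℝ)⁻¹ • ∑ i, e i) := by
  classical
  obtain ⟨hne, hcomp, hconv, -, -⟩ := id hΩ
  set M := V →L[ℝ] V with hMdef
  set H := MaxMix.Hgrp Ω with hHdef
  haveI : CompactSpace H := isCompact_iff_compactSpace.mp (MaxMix.isCompact_Hgrp hΩ)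
  haveI : Nonempty H := ⟨1⟩
  letI : MeasurableSpace H := borel H
  haveI : BorelSpace H := ⟨rfl⟩
  set μ : Measure H := Measure.haarMeasure ⊤ with hμdef
  haveI : IsProbabilityMeasure μ := ⟨by
    rw [← TopologicalSpace.PositiveCompacts.coe_top (α := H)]
    exact Measure.haarMeasure_self⟩
  -- membership of images
  have hmemH : ∀ (u : H) (x : V), x ∈ Ω → ((u : Mˣ) : M) x ∈ Ω := by
    intro u x hx
    have := u.2
    rw [← show (((u : Mˣ) : M) : V → V) '' Ω = Ω from this]
    exact Set.mem_image_of_mem _ hx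
  -- continuity and integrability
  have contF : ∀ x : V, Continuous fun u : H => ((u : Mˣ) : M) x := by
    intro x
    exact (ContinuousLinearMap.apply ℝ V x).continuous.comp
      (Units.continuous_val.comp continuous_subtype_val)
  have integF : ∀ x : V, Integrable (fun u : H => ((u : Mˣ) : M) x) μ := by
    intro x
    exact (contF x).integrable_of_hasCompactSupport (HasCompactSupport.of_compactSpace _)
  have contG : ∀ x : V, Continuous fun u : H => (((u⁻¹ : H) : Mˣ) : M) x := by
    intro x
    exact (contF x).comp continuous_inv
  have integG : ∀ x : V, Integrable (fun u : H => (((u⁻¹ : H) : Mˣ) : M) x) μ := by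
    intro x
    exact (contG x).integrable_of_hasCompactSupport (HasCompactSupport.of_compactSpace _)
  -- the averaging maps
  set P : V → V := fun x => ∫ u : H, ((u : Mˣ) : M) x ∂μ with hPdef
  set Q : V → V := fun x => ∫ u : H, (((u⁻¹ : H) : Mˣ) : M) x ∂μ with hQdef
  have hPmem : ∀ x ∈ Ω, P x ∈ Ω := by
    intro x hx
    exact Convex.integral_mem hconv hcomp.isClosed
      (Filter.Eventually.of_forall fun u => hmemH u x hx) (integF x)
  have hPfix : ∀ (s : H) (x : V), ((s : Mˣ) : M) (P x) = P x := by
    intro s x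
    rw [hPdef]
    rw [← ContinuousLinearMap.integral_comp_comm _ (integF x)]
    have heq : ∀ u : H, ((s : Mˣ) : M) (((u : Mˣ) : M) x) = (((s * u : H) : Mˣ) : M) x := by
      intro u; rfl
    simp_rw [heq]
    exact integral_mul_left_eq_self (fun u : H => ((u : Mˣ) : M) x) s
  have hQinv : ∀ (s : H) (x : V), Q (((s : Mˣ) : M) x) = Q x := by
    intro s x
    rw [hQdef]
    have heq : ∀ u : H, (((u⁻¹ : H) : Mˣ) : M) (((s : Mˣ) : M) x)
        = ((((s⁻¹ * u : H)⁻¹ : H) : Mˣ) : M) x := by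
      intro u
      have : (s⁻¹ * u : H)⁻¹ = u⁻¹ * s := by group
      rw [this]; rfl
    simp_rw [heq]
    exact integral_mul_left_eq_self (fun u : H => (((u⁻¹ : H) : Mˣ) : M) x) s⁻¹
  have hQfix : ∀ x : V, (∀ u : H, ((u : Mˣ) : M) x = x) → Q x = x := by
    intro x hx
    rw [hQdef]
    have heq : ∀ u : H, (((u⁻¹ : H) : Mˣ) : M) x = x := fun u => hx u⁻¹
    simp_rw [heq]
    simp [measure_univ]
  -- Q is linear, hence continuous
  let Qlm : V →ₗ[ℝ] V :=
    { toFun := Q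
      map_add' := by
        intro x y
        show (∫ u : H, (((u⁻¹ : H) : Mˣ) : M) (x + y) ∂μ)
            = (∫ u : H, (((u⁻¹ : H) : Mˣ) : M) x ∂μ) + ∫ u : H, (((u⁻¹ : H) : Mˣ) : M) y ∂μ
        simp_rw [map_add]
        exact integral_add (integG x) (integG y)
      map_smul' := by
        intro c x
        show (∫ u : H, (((u⁻¹ : H) : Mˣ) : M) (c • x) ∂μ)
            = c • ∫ u : H, (((u⁻¹ : H) : Mˣ) : M) x ∂μ
        simp_rw [_root_.map_smul]
        exact integral_smul c _ }
  have hQcont : Continuous Q := Qlm.continuous_of_finiteDimensional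
  -- bridges between autGroup and H
  have toH : ∀ T : V ≃ₗ[ℝ] V, T ∈ autGroup Ω → ∃ u : H, ∀ x, ((u : Mˣ) : M) x = T x := by
    intro T hT
    refine ⟨⟨(T.toContinuousLinearEquiv).toUnit, ?_⟩, fun x => rfl⟩
    show ((T.toContinuousLinearEquiv.toUnit : Mˣ) : M) '' Ω = Ω
    have : (((T.toContinuousLinearEquiv.toUnit : Mˣ) : M) : V → V) = ⇑T := by
      ext x; rfl
    rw [this]; exact hT
  have fromH : ∀ u : H, ∃ T : V ≃ₗ[ℝ] V, T ∈ autGroup Ω ∧ ∀ x, T x = ((u : Mˣ) : M) x := by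
    intro u
    refine ⟨(ContinuousLinearEquiv.unitsEquiv ℝ V (u : Mˣ)).toLinearEquiv, ?_, fun x => rfl⟩
    show (⇑(ContinuousLinearEquiv.unitsEquiv ℝ V (u : Mˣ)).toLinearEquiv) '' Ω = Ω
    have : (⇑(ContinuousLinearEquiv.unitsEquiv ℝ V (u : Mˣ)).toLinearEquiv)
        = ((((u : Mˣ) : M)) : V → V) := by ext x; rfl
    rw [this]; exact u.2
  -- an extreme point
  obtain ⟨ω₀, hω₀⟩ := hcomp.extremePoints_nonempty hne
  set ωstar := Q ω₀ with hωstar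
  -- Q is constant on Ω
  have hQconstΩ : ∀ x ∈ Ω, Q x = ωstar := by
    have hQext : ∀ ω₁ ∈ Set.extremePoints ℝ Ω, Q ω₁ = ωstar := by
      intro ω₁ hω₁
      obtain ⟨T, hT, hTeq⟩ := htrans ω₀ hω₀ ω₁ hω₁
      obtain ⟨u, hu⟩ := toH T hT
      rw [← hTeq, ← hu ω₀]
      exact hQinv u ω₀
    set Sfix : Set V := {x | Q x = ωstar} with hSfix
    have hSconv : Convex ℝ Sfix := by
      intro x hx y hy a b ha hb hab
      show Q (a • x + b • y) = ωstar
      have : Q (a • x + b • y) = a • Q x + b • Q y := by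
        show Qlm (a • x + b • y) = a • Qlm x + b • Qlm y
        simp [map_add, _root_.map_smul]
      rw [this, hx, hy, ← add_smul, hab, one_smul]
    have hSclosed : IsClosed Sfix := isClosed_eq hQcont continuous_const
    intro x hx
    have hsub : Ω ⊆ Sfix := by
      rw [← closure_convexHull_extremePoints hcomp hconv]
      exact closure_minimal (convexHull_min hQext hSconv) hSclosed
    exact hsub hx
  -- the maximally mixed state
  refine ⟨P ω₀, hPmem ω₀ (extremePoints_subset hω₀), ?_, ?_, ?_⟩
  · intro T hT
    obtain ⟨u, hu⟩ := toH T hT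
    rw [← hu (P ω₀)]
    exact hPfix u ω₀
  · -- uniqueness
    intro ω' hω'Ω hω'fix
    have hfixH : ∀ y : V, y ∈ Ω → (∀ T ∈ autGroup Ω, T y = y) → y = ωstar := by
      intro y hyΩ hyfix
      have h1 : ∀ u : H, ((u : Mˣ) : M) y = y := by
        intro u
        obtain ⟨T, hT, hTeq⟩ := fromH u
        rw [← hTeq y]
        exact hyfix T hT
      rw [← hQconstΩ y hyΩ]
      exact (hQfix y h1).symm
    have hPfixAut : ∀ T ∈ autGroup Ω, T (P ω₀) = P ω₀ := by
      intro T hT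
      obtain ⟨u, hu⟩ := toH T hT
      rw [← hu (P ω₀)]
      exact hPfix u ω₀
    have h1 := hfixH ω' hω'Ω hω'fix
    have h2 := hfixH (P ω₀) (hPmem ω₀ (extremePoints_subset hω₀)) hPfixAut
    rw [h1, h2]
  · -- finite case
    intro n e hinj hext
    have hPfixAut : ∀ T ∈ autGroup Ω, T (P ω₀) = P ω₀ := by
      intro T hT
      obtain ⟨u, hu⟩ := toH T hT
      rw [← hu (P ω₀)]
      exact hPfix u ω₀
    have hfixH : ∀ y : V, y ∈ Ω → (∀ T ∈ autGroup Ω, T y = y) → y = ωstar := by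
      intro y hyΩ hyfix
      have h1 : ∀ u : H, ((u : Mˣ) : M) y = y := by
        intro u
        obtain ⟨T, hT, hTeq⟩ := fromH u
        rw [← hTeq y]
        exact hyfix T hT
      rw [← hQconstΩ y hyΩ]
      exact (hQfix y h1).symm
    -- n is positive
    have hω₀mem : ω₀ ∈ Set.range e := by rw [← hext]; exact hω₀
    obtain ⟨i₀, -⟩ := hω₀mem
    have hn : (n : ℝ) ≠ 0 := by
      have : 0 < n := i₀.pos
      positivity
    set avg : V := (n : ℝ)⁻¹ • ∑ i, e i with havg
    have havgsum : avg = ∑ i : Fin n, (n : ℝ)⁻¹ • e i := by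
      rw [havg, Finset.smul_sum]
    have havgΩ : avg ∈ Ω := by
      rw [havgsum]
      apply hconv.sum_mem
      · intro i _; positivity
      · rw [Finset.sum_const, Finset.card_univ, Fintype.card_fin, nsmul_eq_mul]
        field_simp
      · intro i _
        apply extremePoints_subset (𝕜 := ℝ)
        rw [hext]
        exact Set.mem_range_self i
    have havgfix : ∀ T ∈ autGroup Ω, T avg = avg := by
      intro T hT
      have hTinj : Function.Injective (⇑T ∘ e) := T.injective.comp hinj
      have hrange : Set.range (⇑T ∘ e) = Set.range e := by
        rw [Set.range_comp, ← hext, image_extremePoints T Ω, hT, hext]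
      have himgfin : Finset.univ.image (⇑T ∘ e) = Finset.univ.image e := by
        apply Finset.coe_injective
        rw [Finset.coe_image, Finset.coe_image, Finset.coe_univ, Set.image_univ,
          Set.image_univ, hrange]
      have hsum : ∑ i, T (e i) = ∑ i, e i := by
        have h1 : ∑ x ∈ Finset.univ.image (⇑T ∘ e), x = ∑ i, T (e i) :=
          Finset.sum_image fun x _ y _ h => hTinj h
        have h2 : ∑ x ∈ Finset.univ.image e, x = ∑ i, e i :=
          Finset.sum_image fun x _ y _ h => hinj h
        rw [← h1, ← h2, himgfin]
      rw [havg, _root_.map_smul, map_sum, hsum]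
    have h1 := hfixH avg havgΩ havgfix
    have h2 := hfixH (P ω₀) (hPmem ω₀ (extremePoints_subset hω₀)) hPfixAut
    rw [h2, ← h1]

end MaxMix


/-- **Proposition 1 (paper).** A transitive state space has a unique maximally mixed
state, which is the uniform average of the extreme points when these are finite. -/
theorem exists_unique_maximallyMixed
    {V : Type*} [NormedAddCommGroup V] [InnerProductSpace ℝ V] [FiniteDimensional ℝ V]
    {Ω : Set V} (hΩ : IsStateSpace Ω) (htrans : IsTransitive Ω) :
    ∃ ωM ∈ Ω, (∀ T ∈ autGroup Ω, T ωM = ωM) ∧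
      (∀ ω' ∈ Ω, (∀ T ∈ autGroup Ω, T ω' = ω') → ω' = ωM) ∧
      (∀ (n : ℕ) (e : Fin n → V), Function.Injective e →
        Set.extremePoints ℝ Ω = Set.range e → ωM = (n : ℝ)⁻¹ • ∑ i, e i) :=
  MaxMix.main hΩ htrans
end

section
/- Let Ω ⊆ V be a state space with only finitely many extreme points and positive cone V₊, and let J : V → V be a linear map that is strictly positive with respect to the inner product ⟪·,·⟫ (i.e. ⟪x, J y⟫ = ⟪J x, y⟫ for all x, y and ⟪x, J x⟫ > 0 for all nonzero x) and satisfies J(V₊) = V₊. Then for every extreme point ω of Ω there exists μ(ω) > 0 such that J ω = μ(ω) • ω. -/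
open RealInnerProductSpace

variable {V : Type*} [NormedAddCommGroup V] [InnerProductSpace ℝ V] [FiniteDimensional ℝ V]

section MyAux
variable {V : Type*} [NormedAddCommGroup V] [InnerProductSpace ℝ V] [FiniteDimensional ℝ V]

set_option linter.unusedSectionVars false

lemma myaux_smul_mem_posCone {Ω : Set V} {x : V} (hx : x ∈ posCone Ω) {l : ℝ} (hl : 0 ≤ l) :
    l • x ∈ posCone Ω := by
  obtain ⟨m, ψ, hψ, hm, rfl⟩ := hx
  exact ⟨l * m, ψ, hψ, mul_nonneg hl hm, (mul_smul l m ψ).symm⟩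

lemma myaux_exists_unit {Ω : Set V} (hne : Ω.Nonempty) (h0 : (0 : V) ∉ affineSpan ℝ Ω) :
    ∃ u : V, ∀ ω ∈ Ω, ⟪u, ω⟫ = 1 := by
  obtain ⟨p, hp⟩ := hne
  set W : Submodule ℝ V := vectorSpan ℝ Ω with hW
  have hpA : p ∈ affineSpan ℝ Ω := mem_affineSpan ℝ hp
  have hpW : p ∉ W := by
    intro hmem
    apply h0
    have : (0 : V) -ᵥ p ∈ (affineSpan ℝ Ω).direction := by
      rw [direction_affineSpan]
      simpa using W.neg_mem hmem
    exact (AffineSubspace.vsub_right_mem_direction_iff_mem hpA 0).mp this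
  have : ∃ w ∈ Wᗮ, ⟪w, p⟫ ≠ 0 := by
    by_contra hcon
    push_neg at hcon
    have : p ∈ Wᗮᗮ := by
      rw [Submodule.mem_orthogonal]
      intro w hw
      exact hcon w hw
    rw [Submodule.orthogonal_orthogonal] at this
    exact hpW this
  obtain ⟨w, hwW, hwp⟩ := this
  refine ⟨(⟪w, p⟫)⁻¹ • w, fun ω hω => ?_⟩
  have hsub : ω - p ∈ W := by
    simpa using vsub_mem_vectorSpan ℝ hω hp
  have hwsub : ⟪w, ω - p⟫ = 0 := by
    rw [real_inner_comm]
    exact (Submodule.mem_orthogonal W w).mp hwW _ hsub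
  have : ⟪w, ω⟫ = ⟪w, p⟫ := by
    have := inner_sub_right (𝕜 := ℝ) w ω p
    rw [hwsub] at this
    linarith
  rw [real_inner_smul_left, this, inv_mul_cancel₀ hwp]

/-- Extremality of a ray in the cone, expressed by decompositions. -/
def MyConeExt (Ω : Set V) (x : V) : Prop :=
  ∀ y ∈ posCone Ω, ∀ z ∈ posCone Ω, x = y + z → ∃ a : ℝ, y = a • x

variable {Ω : Set V} {u : V} (hu : ∀ ω ∈ Ω, ⟪u, ω⟫ = 1)

include hu in
lemma myaux_extreme_coneExt {ω : V} (hω : ω ∈ Set.extremePoints ℝ Ω) : MyConeExt Ω ω := by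
  rintro y ⟨l, ψ, hψ, hl, rfl⟩ z ⟨k, φ, hφ, hk, rfl⟩ hsum
  have h1 : ⟪u, ω⟫ = 1 := hu _ hω.1
  have hlk : l + k = 1 := by
    have := congrArg (fun v => ⟪u, v⟫) hsum
    simp only [inner_add_right, real_inner_smul_right, hu ψ hψ, hu φ hφ, h1] at this
    linarith
  rcases eq_or_lt_of_le hl with hl0 | hl0
  · exact ⟨0, by rw [← hl0, zero_smul, zero_smul]⟩
  rcases eq_or_lt_of_le hk with hk0 | hk0
  · refine ⟨1, ?_⟩
    rw [one_smul, hsum, ← hk0, zero_smul, add_zero]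
  have hseg : ω ∈ openSegment ℝ ψ φ := ⟨l, k, hl0, hk0, hlk, hsum.symm⟩
  obtain hψω := hω.2 hψ hφ hseg
  exact ⟨l, by rw [hψω]⟩

include hu in
lemma myaux_coneExt_extreme {ω : V} (hωΩ : ω ∈ Ω) (hce : MyConeExt Ω ω) :
    ω ∈ Set.extremePoints ℝ Ω := by
  refine mem_extremePoints.mpr ⟨hωΩ, fun x₁ h₁ x₂ h₂ hseg => ?_⟩
  obtain ⟨a, b, ha, hb, hab, hsum⟩ := hseg
  have key : ∀ s t : ℝ, 0 < s → 0 < t → ∀ z₁ ∈ Ω, ∀ z₂ ∈ Ω, ω = s • z₁ + t • z₂ → z₁ = ω := by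
    intro s t hs ht z₁ hz₁ z₂ hz₂ heq
    obtain ⟨c, hc⟩ := hce (s • z₁) ⟨s, z₁, hz₁, hs.le, rfl⟩ (t • z₂) ⟨t, z₂, hz₂, ht.le, rfl⟩ heq
    have hcs : c = s := by
      have := congrArg (fun v => ⟪u, v⟫) hc
      simp only [real_inner_smul_right, hu z₁ hz₁, hu ω hωΩ] at this
      linarith
    rw [hcs] at hc
    exact smul_right_injective V hs.ne' hc
  constructor
  · exact key a b ha hb x₁ h₁ x₂ h₂ hsum.symm
  · exact key b a hb ha x₂ h₂ x₁ h₁ (by rw [← hsum, add_comm])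

lemma myaux_coneExt_smul {l : ℝ} (hl : 0 < l) {ψ : V} (hce : MyConeExt Ω (l • ψ)) :
    MyConeExt Ω ψ := by
  intro y hy z hz hsum
  obtain ⟨a, ha⟩ := hce (l • y) (myaux_smul_mem_posCone hy hl.le) (l • z)
    (myaux_smul_mem_posCone hz hl.le) (by rw [hsum, smul_add])
  refine ⟨a, ?_⟩
  have : l • y = l • (a • ψ) := by rw [ha, smul_comm]
  exact smul_right_injective V hl.ne' this

lemma myaux_J_coneExt {J : V →ₗ[ℝ] V} (hinj : Function.Injective J)
    (hsurj : ∀ y ∈ posCone Ω, ∃ y' ∈ posCone Ω, J y' = y)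
    {x : V} (hce : MyConeExt Ω x) : MyConeExt Ω (J x) := by
  intro y hy z hz hsum
  obtain ⟨y', hy', rfl⟩ := hsurj y hy
  obtain ⟨z', hz', rfl⟩ := hsurj z hz
  have hx : x = y' + z' := hinj (by rw [map_add, hsum])
  obtain ⟨a, ha⟩ := hce y' hy' z' hz' hx
  exact ⟨a, by rw [ha, map_smul]⟩

lemma myaux_self_pos {x : V} (hx : x ≠ 0) : 0 < ⟪x, x⟫ := by
  rcases (real_inner_self_nonneg (x := x)).eq_or_lt with h | h
  · exact absurd (inner_self_eq_zero.mp h.symm) hx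
  · exact h

variable {J : V →ₗ[ℝ] V} (hsym : ∀ x y : V, ⟪x, J y⟫ = ⟪J x, y⟫)

include hsym in
lemma myaux_pow_sym : ∀ (n : ℕ) (x y : V), ⟪x, (J ^ n) y⟫ = ⟪(J ^ n) x, y⟫ := by
  intro n
  induction n with
  | zero => intro x y; simp
  | succ n ih =>
    intro x y
    have hL : (J ^ (n + 1)) y = (J ^ n) (J y) := by rw [pow_succ]; rfl
    have hR : (J ^ (n + 1)) x = J ((J ^ n) x) := by rw [pow_succ']; rfl
    rw [hL, hR, ih x (J y), hsym]

include hsym in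
lemma myaux_split (a b : ℕ) (x y : V) : ⟪x, (J ^ (a + b)) y⟫ = ⟪(J ^ a) x, (J ^ b) y⟫ := by
  have h : (J ^ (a + b)) y = (J ^ a) ((J ^ b) y) := by rw [pow_add]; rfl
  rw [h, myaux_pow_sym hsym]

variable (hpos : ∀ x : V, x ≠ 0 → 0 < ⟪x, J x⟫)

include hpos in
lemma myaux_pos_nonneg (x : V) : 0 ≤ ⟪x, J x⟫ := by
  by_cases hx : x = 0
  · simp [hx]
  · exact (hpos x hx).le

include hsym hpos in
lemma myaux_Jcs (x y : V) : ⟪x, J y⟫ ^ 2 ≤ ⟪x, J x⟫ * ⟪y, J y⟫ := by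
  have hyx : ⟪y, J x⟫ = ⟪x, J y⟫ := by rw [hsym, real_inner_comm]
  have key : ∀ t : ℝ, 0 ≤ ⟪y, J y⟫ * (t * t) + -(2 * ⟪x, J y⟫) * t + ⟪x, J x⟫ := by
    intro t
    have h0 : 0 ≤ ⟪x - t • y, J (x - t • y)⟫ := myaux_pos_nonneg hpos _
    rw [map_sub, map_smul, inner_sub_left, inner_sub_right, inner_sub_right,
      real_inner_smul_left, real_inner_smul_left, real_inner_smul_right,
      real_inner_smul_right, hyx] at h0
    nlinarith [h0]
  have hd := discrim_le_zero key
  rw [discrim] at hd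
  nlinarith [hd]

variable {ω : V} (hω : ω ≠ 0) (hker : ∀ x : V, J x = 0 → x = 0)

include hker hω in
lemma myaux_pow_ne (n : ℕ) : (J ^ n) ω ≠ 0 := by
  induction n with
  | zero => simpa using hω
  | succ n ih =>
    have h : (J ^ (n + 1)) ω = J ((J ^ n) ω) := by rw [pow_succ']; rfl
    rw [h]
    intro hc
    exact ih (hker _ hc)

include hsym hpos hker hω in
lemma myaux_c_pos (k : ℕ) : 0 < ⟪ω, (J ^ k) ω⟫ := by
  rcases Nat.even_or_odd k with ⟨a, hk⟩ | ⟨a, hk⟩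
  · subst hk
    rw [myaux_split hsym a a]
    exact myaux_self_pos (myaux_pow_ne hω hker a)
  · have hk' : k = a + (1 + a) := by omega
    rw [hk', myaux_split hsym a (1 + a), myaux_split hsym 1 a, pow_one, real_inner_comm]
    exact hpos _ (myaux_pow_ne hω hker a)

lemma myaux_push (n : ℕ) (z : V) : (J ^ (1 + n)) z = J ((J ^ n) z) := by
  rw [pow_add, pow_one]; rfl

include hsym hpos in
lemma myaux_step (k : ℕ) :
    ⟪ω, (J ^ (k + 1)) ω⟫ ^ 2 ≤ ⟪ω, (J ^ k) ω⟫ * ⟪ω, (J ^ (k + 2)) ω⟫ := by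
  rcases Nat.even_or_odd k with ⟨a, hk⟩ | ⟨a, hk⟩
  · have e1 : k + 1 = a + (a + 1) := by omega
    have e2 : k = a + a := by omega
    have e3 : k + 2 = (a + 1) + (a + 1) := by omega
    rw [e1, e3, e2, myaux_split hsym a (a + 1), myaux_split hsym a a,
      myaux_split hsym (a + 1) (a + 1)]
    have := real_inner_mul_inner_self_le ((J ^ a) ω) ((J ^ (a + 1)) ω)
    nlinarith [this]
  · have e1 : k + 1 = a + (1 + (a + 1)) := by omega
    have e2 : k = a + (1 + a) := by omega
    have e3 : k + 2 = (a + 1) + (1 + (a + 1)) := by omega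
    rw [e1, e3, e2, myaux_split hsym a (1 + (a + 1)), myaux_split hsym a (1 + a),
      myaux_split hsym (a + 1) (1 + (a + 1)), myaux_push (a + 1), myaux_push a]
    exact myaux_Jcs hsym hpos _ _

lemma myaux_mono {c : ℕ → ℝ} (cpos : ∀ k, 0 < c k)
    (hstep : ∀ k, c (k + 1) ^ 2 ≤ c k * c (k + 2)) :
    ∀ k, 1 ≤ k → c 2 * c k ≤ c 1 * c (k + 1) := by
  intro k hk
  induction k, hk using Nat.le_induction with
  | base => rw [mul_comm]
  | succ n hn ih =>
    have h1 := hstep n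
    have p1 := cpos n
    have p2 := cpos (n + 1)
    have p3 := cpos (n + 2)
    have p4 := cpos 1
    have p5 := cpos 2
    nlinarith [mul_le_mul_of_nonneg_left h1 p5.le, mul_le_mul_of_nonneg_right ih p3.le,
      mul_pos p2 p3]

end MyAux

/-- **Lemma B.3 (paper).** If `Ω` has finitely many extreme points and `J` is a strictly
positive linear map with `J(V₊) = V₊`, then `J` fixes every extreme ray: each extreme
point is an eigenvector of `J` with positive eigenvalue. -/
theorem strictlyPositive_cone_preserving_fixes_extremePoints
    {V : Type*} [NormedAddCommGroup V] [InnerProductSpace ℝ V] [FiniteDimensional ℝ V]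
    {Ω : Set V} (hΩ : IsStateSpace Ω) (hfin : (Set.extremePoints ℝ Ω).Finite)
    {J : V →ₗ[ℝ] V} (hsym : ∀ x y : V, ⟪x, J y⟫ = ⟪J x, y⟫)
    (hpos : ∀ x : V, x ≠ 0 → 0 < ⟪x, J x⟫)
    (hcone : J '' posCone Ω = posCone Ω) :
    ∀ ω ∈ Set.extremePoints ℝ Ω, ∃ μ : ℝ, 0 < μ ∧ J ω = μ • ω := by
  intro ω hω
  obtain ⟨u, hu⟩ := myaux_exists_unit hΩ.1 hΩ.2.2.2.1
  have hker : ∀ x : V, J x = 0 → x = 0 := by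
    intro x hx
    by_contra h
    have := hpos x h
    rw [hx, inner_zero_right] at this
    exact lt_irrefl 0 this
  have hinj : Function.Injective J := by
    intro a b hab
    have h : J (a - b) = 0 := by rw [map_sub, hab, sub_self]
    have := hker _ h
    rwa [sub_eq_zero] at this
  have hJmem : ∀ x ∈ posCone Ω, J x ∈ posCone Ω := by
    intro x hx
    rw [← hcone]
    exact Set.mem_image_of_mem _ hx
  have hJsurj : ∀ y ∈ posCone Ω, ∃ y' ∈ posCone Ω, J y' = y := by
    intro y hy
    rw [← hcone] at hy
    obtain ⟨y', hy', h⟩ := hy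
    exact ⟨y', hy', h⟩
  have hne0 : ∀ ψ ∈ Ω, ψ ≠ 0 := by
    intro ψ hψ h
    have := hu ψ hψ
    rw [h, inner_zero_right] at this
    norm_num at this
  set N : V → V := fun x => (⟪u, J x⟫)⁻¹ • J x with hN
  set φ : ℕ → V := fun k => N^[k] ω with hφ
  have hφ0 : φ 0 = ω := rfl
  have hφs : ∀ k, φ (k + 1) = N (φ k) := by
    intro k
    simp only [hφ]
    exact Function.iterate_succ_apply' N k ω
  have key : ∀ k, φ k ∈ Set.extremePoints ℝ Ω ∧ ∃ c : ℝ, 0 < c ∧ (J ^ k) ω = c • φ k := by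
    intro k
    induction k with
    | zero => exact ⟨by rwa [hφ0], 1, one_pos, by simp [hφ0]⟩
    | succ k ih =>
      obtain ⟨hE, c, hc, hJk⟩ := ih
      have hmem : φ k ∈ posCone Ω := ⟨1, φ k, hE.1, zero_le_one, (one_smul ℝ _).symm⟩
      have hce : MyConeExt Ω (φ k) := myaux_extreme_coneExt hu hE
      have hJce : MyConeExt Ω (J (φ k)) := myaux_J_coneExt hinj hJsurj hce
      obtain ⟨l, ψ, hψΩ, hl, hlψ⟩ := hJmem _ hmem
      have hJne : J (φ k) ≠ 0 := fun h => hne0 _ hE.1 (hker _ h)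
      have hl0 : 0 < l := by
        rcases hl.eq_or_lt with h | h
        · exfalso
          apply hJne
          rw [hlψ, ← h, zero_smul]
        · exact h
      have huJ : ⟪u, J (φ k)⟫ = l := by
        rw [hlψ, real_inner_smul_right, hu ψ hψΩ, mul_one]
      have hNφ : φ (k + 1) = ψ := by
        rw [hφs, hN]
        simp only []
        rw [huJ, hlψ, smul_smul, inv_mul_cancel₀ hl0.ne', one_smul]
      have hψce : MyConeExt Ω ψ := myaux_coneExt_smul hl0 (hlψ ▸ hJce)
      have hψE : ψ ∈ Set.extremePoints ℝ Ω := myaux_coneExt_extreme hu hψΩ hψce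
      refine ⟨by rwa [hNφ], c * l, mul_pos hc hl0, ?_⟩
      have hp : (J ^ (k + 1)) ω = J ((J ^ k) ω) := by rw [pow_succ']; rfl
      rw [hp, hJk, map_smul, hlψ, hNφ, smul_smul]
  have stepJ : ∀ k, ∃ d : ℝ, 0 < d ∧ J (φ k) = d • φ (k + 1) := by
    intro k
    obtain ⟨_, c, hc, h1⟩ := key k
    obtain ⟨_, c', hc', h2⟩ := key (k + 1)
    refine ⟨c' / c, div_pos hc' hc, ?_⟩
    have h3 : (J ^ (k + 1)) ω = J ((J ^ k) ω) := by rw [pow_succ']; rfl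
    rw [h2, h1, map_smul] at h3
    calc J (φ k) = c⁻¹ • (c • J (φ k)) := by
          rw [smul_smul, inv_mul_cancel₀ hc.ne', one_smul]
      _ = c⁻¹ • (c' • φ (k + 1)) := by rw [← h3]
      _ = (c' / c) • φ (k + 1) := by rw [smul_smul, div_eq_inv_mul]
  have stepinj : ∀ k l, φ (k + 1) = φ (l + 1) → φ k = φ l := by
    intro k l hkl
    obtain ⟨d, hd, h1⟩ := stepJ k
    obtain ⟨d', hd', h2⟩ := stepJ l
    have hJ : J (φ k) = (d / d') • J (φ l) := by
      rw [h1, h2, hkl, smul_smul, div_mul_cancel₀ _ hd'.ne']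
    have hφkl : φ k = (d / d') • φ l := hinj (by rw [map_smul]; exact hJ)
    have h1u : ⟪u, φ k⟫ = 1 := hu _ (key k).1.1
    have h2u : ⟪u, φ l⟫ = 1 := hu _ (key l).1.1
    rw [hφkl, real_inner_smul_right, h2u, mul_one] at h1u
    rw [hφkl, h1u, one_smul]
  have hnotinj : ¬ Function.Injective φ := by
    intro hin
    exact (Set.infinite_of_injective_forall_mem hin (fun k => (key k).1)) hfin
  obtain ⟨i, j, hlt, hij⟩ : ∃ i j, i < j ∧ φ i = φ j := by
    obtain ⟨a, b, hab, hne⟩ := Function.not_injective_iff.mp hnotinj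
    rcases hne.lt_or_gt with h | h
    · exact ⟨a, b, h, hab⟩
    · exact ⟨b, a, h, hab.symm⟩
  have hshift : ∀ t, t ≤ i → φ (i - t) = φ (j - t) := by
    intro t
    induction t with
    | zero => intro _; simpa using hij
    | succ t ih =>
      intro hti
      have h1 := ih (by omega)
      have e1 : i - t = (i - (t + 1)) + 1 := by omega
      have e2 : j - t = (j - (t + 1)) + 1 := by omega
      rw [e1, e2] at h1
      exact stepinj _ _ h1
  have hper : φ 0 = φ (j - i) := by
    have := hshift i le_rfl
    simpa using this
  set m : ℕ := j - i with hm
  have hm1 : 1 ≤ m := by omega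
  obtain ⟨_, lam, hlam, hJm⟩ := key m
  rw [← hper, hφ0] at hJm
  have hωne : ω ≠ 0 := hne0 ω hω.1
  have cpos : ∀ k, 0 < ⟪ω, (J ^ k) ω⟫ := myaux_c_pos hsym hpos hωne hker
  have hmono := myaux_mono cpos (myaux_step hsym hpos) m hm1
  have hstep0 := myaux_step hsym hpos (ω := ω) 0
  have h0 : ⟪ω, (J ^ 0) ω⟫ = ⟪ω, ω⟫ := by simp
  have h1 : ⟪ω, (J ^ 1) ω⟫ = ⟪ω, J ω⟫ := by rw [pow_one]
  have h2 : ⟪ω, (J ^ 2) ω⟫ = ⟪J ω, J ω⟫ := by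
    have h := myaux_split hsym 1 1 ω ω
    rw [pow_one] at h
    exact h
  have hcm : ⟪ω, (J ^ m) ω⟫ = lam * ⟪ω, ω⟫ := by rw [hJm, real_inner_smul_right]
  have hcm1 : ⟪ω, (J ^ (m + 1)) ω⟫ = lam * ⟪ω, J ω⟫ := by
    have hp : (J ^ (m + 1)) ω = J ((J ^ m) ω) := by rw [pow_succ']; rfl
    rw [hp, hJm, map_smul, real_inner_smul_right]
  rw [hcm, hcm1, h1, h2] at hmono
  rw [h0, h1, h2] at hstep0
  have heq : ⟪ω, J ω⟫ ^ 2 = ⟪ω, ω⟫ * ⟪J ω, J ω⟫ := by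
    refine le_antisymm hstep0 ?_
    nlinarith [hmono, hlam]
  have hA : 0 < ⟪ω, ω⟫ := myaux_self_pos hωne
  refine ⟨⟪ω, J ω⟫ / ⟪ω, ω⟫, div_pos (hpos ω hωne) hA, ?_⟩
  set μ : ℝ := ⟪ω, J ω⟫ / ⟪ω, ω⟫ with hμ
  have hzero : ⟪J ω - μ • ω, J ω - μ • ω⟫ = 0 := by
    rw [inner_sub_left, inner_sub_right, inner_sub_right, real_inner_smul_left,
      real_inner_smul_left, real_inner_smul_right, real_inner_smul_right,
      real_inner_comm (J ω) ω, hμ]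
    field_simp
    have hcomm : ⟪J ω, ω⟫ = ⟪ω, J ω⟫ := real_inner_comm _ _
    linear_combination (-1 : ℝ) * heq - 2 * ⟪ω, J ω⟫ * hcomm
  have := inner_self_eq_zero.mp hzero
  rw [sub_eq_zero] at this
  exact this
end

section
/- Let Ω ⊆ V be a state space with only finitely many extreme points and positive cone V₊, and let J, K : V → V be linear maps, each strictly positive with respect to the inner product ⟪·,·⟫ (i.e. self-adjoint with ⟪x, J x⟫ > 0 and ⟪x, K x⟫ > 0 for all nonzero x), such that J(V₊) = K(V₊) = V₊*, where V₊* := {y ∈ V : ⟪x, y⟫ ≥ 0 for all x ∈ V₊} is the internal dual cone of V₊. Then for every extreme point ω of Ω there exists μ(ω) > 0 such that K ω = μ(ω) • (J ω). -/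
open RealInnerProductSpace

variable {V : Type*} [NormedAddCommGroup V] [InnerProductSpace ℝ V] [FiniteDimensional ℝ V]

/-- **Lemma B.4 (paper).** If `Ω` has finitely many extreme points and `J, K` are
strictly positive linear maps both mapping the positive cone onto its internal dual
cone, then on every extreme point `K` is a positive multiple of `J`. -/
theorem strictlyPositive_maps_agree_on_extremePoints
    {V : Type*} [NormedAddCommGroup V] [InnerProductSpace ℝ V] [FiniteDimensional ℝ V]
    {Ω : Set V} (hΩ : IsStateSpace Ω) (hfin : (Set.extremePoints ℝ Ω).Finite)
    {J K : V →ₗ[ℝ] V}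
    (hJsym : ∀ x y : V, ⟪x, J y⟫ = ⟪J x, y⟫)
    (hJpos : ∀ x : V, x ≠ 0 → 0 < ⟪x, J x⟫)
    (hKsym : ∀ x y : V, ⟪x, K y⟫ = ⟪K x, y⟫)
    (hKpos : ∀ x : V, x ≠ 0 → 0 < ⟪x, K x⟫)
    (hJcone : J '' posCone Ω = {y : V | ∀ x ∈ posCone Ω, 0 ≤ ⟪x, y⟫})
    (hKcone : K '' posCone Ω = {y : V | ∀ x ∈ posCone Ω, 0 ≤ ⟪x, y⟫}) :
    ∀ ω ∈ Set.extremePoints ℝ Ω, ∃ μ : ℝ, 0 < μ ∧ K ω = μ • (J ω) := by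
  obtain ⟨⟨ω₀, hω₀⟩, hcomp, hconv, h0, hdim⟩ := hΩ
  -- the normalization functional `e`
  set W : Submodule ℝ V := vectorSpan ℝ Ω with hW
  have hω₀W : ω₀ ∉ W := by
    intro h
    apply h0
    have h1 : ω₀ ∈ affineSpan ℝ Ω := subset_affineSpan ℝ Ω hω₀
    have h2 : (-ω₀) +ᵥ ω₀ ∈ affineSpan ℝ Ω := by
      refine AffineSubspace.vadd_mem_of_mem_direction ?_ h1
      rw [direction_affineSpan]
      exact neg_mem h
    simpa using h2
  set n : V := ω₀ - (W.orthogonalProjectionOnto ω₀ : V) with hn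
  have hnW : n ∈ Wᗮ := W.sub_starProjection_mem_orthogonal ω₀
  have hnne : n ≠ 0 := by
    intro h
    apply hω₀W
    have : ω₀ = (W.orthogonalProjectionOnto ω₀ : V) := by
      have := sub_eq_zero.mp h; linear_combination (norm := module) this
    rw [this]; exact (W.orthogonalProjectionOnto ω₀).2
  have hnorth : ∀ w ∈ W, ⟪n, w⟫ = 0 := by
    intro w hw
    rw [real_inner_comm]
    exact (Submodule.mem_orthogonal W n).mp hnW w hw
  have hnω₀ : ⟪n, ω₀⟫ = ‖n‖ ^ 2 := by
    have : ω₀ = n + (W.orthogonalProjectionOnto ω₀ : V) := by rw [hn]; abel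
    rw [this, inner_add_right, hnorth _ (W.orthogonalProjectionOnto ω₀).2,
      real_inner_self_eq_norm_sq]
    ring
  set e : V := (‖n‖ ^ 2)⁻¹ • n with he
  have hnsq : (0:ℝ) < ‖n‖ ^ 2 := pow_pos (norm_pos_iff.mpr hnne) 2
  have heΩ : ∀ ω ∈ Ω, ⟪e, ω⟫ = 1 := by
    intro ω hω
    have hmem : ω - ω₀ ∈ W := by
      have := vsub_mem_vectorSpan ℝ hω hω₀
      simpa [hW] using this
    have : ω = ω₀ + (ω - ω₀) := by abel
    rw [this, inner_add_right, he, real_inner_smul_left, real_inner_smul_left,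
      hnω₀, hnorth _ hmem]
    field_simp
    ring
  -- basic facts about Ω and the cone
  have hne0 : ∀ ω ∈ Ω, ω ≠ (0:V) := by
    intro ω hω h
    have := heΩ ω hω
    rw [h, inner_zero_right] at this
    norm_num at this
  have hprop : ∀ ω₁ ∈ Ω, ∀ ω₂ ∈ Ω, ∀ t : ℝ, ω₁ = t • ω₂ → ω₁ = ω₂ := by
    intro ω₁ h₁ ω₂ h₂ t ht
    have h1 := heΩ ω₁ h₁
    have h2 := heΩ ω₂ h₂
    rw [ht, real_inner_smul_right, h2, mul_one] at h1
    rw [ht, h1, one_smul]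
  have hΩC : Ω ⊆ posCone Ω := fun ω hω => ⟨1, ω, hω, zero_le_one, (one_smul ℝ ω).symm⟩
  have hCrep : ∀ x ∈ posCone Ω, x ≠ 0 → ∃ l : ℝ, 0 < l ∧ ∃ ω ∈ Ω, x = l • ω := by
    rintro x ⟨l, ω, hω, hl, rfl⟩ hx
    refine ⟨l, ?_, ω, hω, rfl⟩
    rcases hl.lt_or_eq with h | h
    · exact h
    · exfalso; apply hx; rw [← h, zero_smul]
  -- J and K are bijective
  have hJinj : Function.Injective J := by
    rw [← LinearMap.ker_eq_bot, LinearMap.ker_eq_bot']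
    intro x hx
    by_contra h
    have := hJpos x h
    rw [hx, inner_zero_right] at this
    norm_num at this
  have hKinj : Function.Injective K := by
    rw [← LinearMap.ker_eq_bot, LinearMap.ker_eq_bot']
    intro x hx
    by_contra h
    have := hKpos x h
    rw [hx, inner_zero_right] at this
    norm_num at this
  have hJbij : Function.Bijective J :=
    ⟨hJinj, (LinearMap.injective_iff_surjective).mp hJinj⟩
  set Je : V ≃ₗ[ℝ] V := LinearEquiv.ofBijective J hJbij with hJe
  set L : V →ₗ[ℝ] V := (Je.symm : V →ₗ[ℝ] V) ∘ₗ K with hL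
  have hJL : ∀ x : V, J (L x) = K x := by
    intro x
    show Je (L x) = K x
    simp [hL]
  have hLinj : Function.Injective L := by
    intro x y h
    apply hKinj
    rw [← hJL, ← hJL, h]
  -- L maps the cone into itself and onto itself
  have hLC : ∀ x ∈ posCone Ω, L x ∈ posCone Ω := by
    intro x hx
    have h1 : K x ∈ K '' posCone Ω := ⟨x, hx, rfl⟩
    rw [hKcone, ← hJcone] at h1
    obtain ⟨z, hz, hzx⟩ := h1
    have : L x = z := hJinj (by rw [hJL, hzx])
    rw [this]; exact hz
  have hLsurjC : ∀ x ∈ posCone Ω, ∃ z ∈ posCone Ω, L z = x := by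
    intro x hx
    have h1 : J x ∈ J '' posCone Ω := ⟨x, hx, rfl⟩
    rw [hJcone, ← hKcone] at h1
    obtain ⟨z, hz, hzx⟩ := h1
    refine ⟨z, hz, hJinj ?_⟩
    rw [hJL, hzx]
  -- B-symmetry and B-positivity of powers of L
  have hBsym : ∀ x y : V, ⟪L x, J y⟫ = ⟪x, J (L y)⟫ := by
    intro x y
    calc ⟪L x, J y⟫ = ⟪J (L x), y⟫ := hJsym (L x) y
      _ = ⟪K x, y⟫ := by rw [hJL]
      _ = ⟪x, K y⟫ := (hKsym x y).symm
      _ = ⟪x, J (L y)⟫ := by rw [hJL]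
  have hJnn : ∀ x : V, 0 ≤ ⟪x, J x⟫ := by
    intro x
    rcases eq_or_ne x 0 with h | h
    · simp [h]
    · exact (hJpos x h).le
  have hKnn : ∀ x : V, 0 ≤ ⟪x, K x⟫ := by
    intro x
    rcases eq_or_ne x 0 with h | h
    · simp [h]
    · exact (hKpos x h).le
  have hpowsucc : ∀ (j : ℕ) (x : V), (L ^ (j+1)) x = L ((L ^ j) x) := by
    intro j x
    rw [pow_succ']
    rfl
  have key : ∀ (j : ℕ) (x : V), 0 ≤ ⟪x, J ((L ^ j) x)⟫ := by
    intro j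
    induction j using Nat.strong_induction_on with
    | _ j ih =>
      match j with
      | 0 => intro x; simpa using hJnn x
      | 1 => intro x; rw [pow_one, hJL]; exact hKnn x
      | (j+2) =>
        intro x
        have h1 := ih j (by omega) (L x)
        have h2 : (L ^ (j+1)) x = (L ^ j) (L x) := by
          rw [pow_succ]; rfl
        calc (0:ℝ) ≤ ⟪L x, J ((L ^ j) (L x))⟫ := h1
          _ = ⟪L x, J ((L ^ (j+1)) x)⟫ := by rw [h2]
          _ = ⟪x, J (L ((L ^ (j+1)) x))⟫ := hBsym x _
          _ = ⟪x, J ((L ^ (j+2)) x)⟫ := by rw [← hpowsucc]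
  -- L maps extreme points to positive multiples of extreme points
  have step : ∀ ω ∈ Set.extremePoints ℝ Ω, ∃ c : ℝ, ∃ ω' : V,
      0 < c ∧ ω' ∈ Set.extremePoints ℝ Ω ∧ L ω = c • ω' := by
    intro ω hω
    obtain ⟨hωΩ, hωext⟩ := hω
    have hLω : L ω ∈ posCone Ω := hLC ω (hΩC hωΩ)
    have hLωne : L ω ≠ 0 := by
      intro h
      exact hne0 ω hωΩ (hLinj (by rw [h, map_zero]))
    obtain ⟨l, hl, τ, hτΩ, hτeq⟩ := hCrep (L ω) hLω hLωne
    refine ⟨l, τ, hl, ⟨hτΩ, ?_⟩, hτeq⟩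
    rintro ρ₁ hρ₁ ρ₂ hρ₂ ⟨a, b, ha, hb, hab, habτ⟩
    obtain ⟨z₁, hz₁C, hz₁⟩ := hLsurjC ρ₁ (hΩC hρ₁)
    obtain ⟨z₂, hz₂C, hz₂⟩ := hLsurjC ρ₂ (hΩC hρ₂)
    have hz₁ne : z₁ ≠ 0 := by
      intro h; exact hne0 ρ₁ hρ₁ (by rw [← hz₁, h, map_zero])
    have hz₂ne : z₂ ≠ 0 := by
      intro h; exact hne0 ρ₂ hρ₂ (by rw [← hz₂, h, map_zero])
    obtain ⟨s₁, hs₁, τ₁, hτ₁Ω, hz₁eq⟩ := hCrep z₁ hz₁C hz₁ne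
    obtain ⟨s₂, hs₂, τ₂, hτ₂Ω, hz₂eq⟩ := hCrep z₂ hz₂C hz₂ne
    -- ω = (l*a*s₁) • τ₁ + (l*b*s₂) • τ₂
    have hωdecomp : ω = (l*a*s₁) • τ₁ + (l*b*s₂) • τ₂ := by
      apply hLinj
      rw [map_add, map_smul, map_smul, hτeq]
      have haux1 : s₁ • L τ₁ = ρ₁ := by rw [← map_smul, ← hz₁eq, hz₁]
      have haux2 : s₂ • L τ₂ = ρ₂ := by rw [← map_smul, ← hz₂eq, hz₂]
      linear_combination (norm := module) (-(l*a)) • haux1 + (-(l*b)) • haux2 + (-l) • habτ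
    have hsum : l*a*s₁ + l*b*s₂ = 1 := by
      have h1 := heΩ ω hωΩ
      rw [hωdecomp, inner_add_right, real_inner_smul_right, real_inner_smul_right,
        heΩ τ₁ hτ₁Ω, heΩ τ₂ hτ₂Ω] at h1
      linarith
    have hmem : ω ∈ openSegment ℝ τ₁ τ₂ :=
      ⟨l*a*s₁, l*b*s₂, by positivity, by positivity, hsum, hωdecomp.symm⟩
    obtain ⟨hτ₁ω, hτ₂ω⟩ := (mem_extremePoints.mp ⟨hωΩ, hωext⟩).2 τ₁ hτ₁Ω τ₂ hτ₂Ω hmem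
    have hρ₁τ : ρ₁ = (s₁ * l) • τ := by
      rw [← hz₁, hz₁eq, map_smul, hτ₁ω, hτeq, smul_smul]
    have hρ₂τ : ρ₂ = (s₂ * l) • τ := by
      rw [← hz₂, hz₂eq, map_smul, hτ₂ω, hτeq, smul_smul]
    exact hprop ρ₁ hρ₁ τ hτΩ _ hρ₁τ
  -- choose the successor map on extreme points
  choose! c φ hc hφ hLφ using step
  intro ω hω
  set ρ : ℕ → V := fun n => φ^[n] ω with hρ
  have hρ0 : ρ 0 = ω := rfl
  have hρsucc : ∀ n, ρ (n+1) = φ (ρ n) := fun n => Function.iterate_succ_apply' φ n ω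
  have hρEP : ∀ n, ρ n ∈ Set.extremePoints ℝ Ω := by
    intro n
    induction n with
    | zero => rw [hρ0]; exact hω
    | succ n ih => rw [hρsucc]; exact hφ _ ih
  have hpow' : ∀ (j : ℕ) (x : V), (L ^ (j+1)) x = (L ^ j) (L x) := by
    intro j x; rw [pow_succ]; rfl
  have hiter : ∀ n : ℕ, ∃ Cn : ℝ, 0 < Cn ∧ (L ^ n) ω = Cn • ρ n := by
    intro n
    induction n with
    | zero => exact ⟨1, one_pos, by simp [hρ0]⟩
    | succ n ih =>
      obtain ⟨Cn, hCn, hCneq⟩ := ih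
      refine ⟨Cn * c (ρ n), mul_pos hCn (hc _ (hρEP n)), ?_⟩
      rw [hpowsucc, hCneq, map_smul, hLφ _ (hρEP n), hρsucc, smul_smul]
  -- pigeonhole
  obtain ⟨pa, pb, hpab, hpeq⟩ := Set.Finite.exists_lt_map_eq_of_forall_mem hρEP hfin
  obtain ⟨Ca, hCa, hCaeq⟩ := hiter pa
  obtain ⟨Cb, hCb, hCbeq⟩ := hiter pb
  set k : ℕ := pb - pa with hk
  have hk0 : 0 < k := by omega
  set D : ℝ := Cb / Ca with hD
  have hD0 : 0 < D := div_pos hCb hCa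
  have hLainj : Function.Injective ⇑(L ^ pa) := by
    have : ⇑(L ^ pa) = (⇑L)^[pa] := by
      funext x; exact Module.End.pow_apply L pa x
    rw [this]
    exact Function.Injective.iterate hLinj pa
  have hLk : (L ^ k) ω = D • ω := by
    apply hLainj
    have h1 : (L ^ pa) ((L ^ k) ω) = (L ^ pb) ω := by
      have : pb = pa + k := by omega
      rw [this, pow_add]
      rfl
    rw [h1, map_smul, hCaeq, hCbeq, ← hpeq, smul_smul, hD]
    congr 1
    field_simp
  -- extract the k-th root
  set m : ℝ := D ^ ((k : ℝ)⁻¹) with hm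
  have hm0 : 0 < m := Real.rpow_pos_of_pos hD0 _
  have hmk : m ^ k = D := Real.rpow_inv_natCast_pow hD0.le hk0.ne'
  set u : V := L ω - m • ω with hu
  have hLju : ∀ j : ℕ, (L ^ j) u = (L ^ (j+1)) ω - m • ((L ^ j) ω) := by
    intro j
    rw [hu, map_sub, map_smul, hpow']
  -- telescoping sum
  have htel : ∑ j ∈ Finset.range k, (m ^ (k - 1 - j)) • ((L ^ j) u) = 0 := by
    have h1 : ∀ j ∈ Finset.range k, (m ^ (k - 1 - j)) • ((L ^ j) u)
        = m ^ (k - (j+1)) • (L ^ (j+1)) ω - m ^ (k - j) • (L ^ j) ω := by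
      intro j hj
      have hjk : j < k := Finset.mem_range.mp hj
      have e1 : k - j = (k - 1 - j) + 1 := by omega
      have e2 : k - (j + 1) = k - 1 - j := by omega
      rw [hLju, smul_sub, smul_smul, e2, e1, pow_succ m (k-1-j)]
    have h2 := Finset.sum_range_sub (fun i => m ^ (k - i) • (L ^ i) ω) k
    calc ∑ j ∈ Finset.range k, (m ^ (k - 1 - j)) • ((L ^ j) u)
        = ∑ j ∈ Finset.range k,
            (m ^ (k - (j+1)) • (L ^ (j+1)) ω - m ^ (k - j) • (L ^ j) ω) :=
          Finset.sum_congr rfl h1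
      _ = m ^ (k - k) • (L ^ k) ω - m ^ (k - 0) • (L ^ 0) ω := h2
      _ = 0 := by
          rw [Nat.sub_self, Nat.sub_zero, pow_zero, one_smul, hLk, hmk, pow_zero,
            Module.End.one_apply, sub_self]
  -- positivity forces u = 0
  have hsum0 : ∑ j ∈ Finset.range k, m ^ (k - 1 - j) * ⟪u, J ((L ^ j) u)⟫ = 0 := by
    have h3 : ⟪u, J (∑ j ∈ Finset.range k, (m ^ (k - 1 - j)) • ((L ^ j) u))⟫
        = ∑ j ∈ Finset.range k, m ^ (k - 1 - j) * ⟪u, J ((L ^ j) u)⟫ := by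
      rw [map_sum, inner_sum]
      refine Finset.sum_congr rfl fun j hj => ?_
      rw [map_smul, real_inner_smul_right]
    rw [htel] at h3
    rw [← h3, map_zero, inner_zero_right]
  have hterms : ∀ j ∈ Finset.range k, 0 ≤ m ^ (k - 1 - j) * ⟪u, J ((L ^ j) u)⟫ :=
    fun j _ => mul_nonneg (pow_nonneg hm0.le _) (key j u)
  have hzero := (Finset.sum_eq_zero_iff_of_nonneg hterms).mp hsum0 0 (Finset.mem_range.mpr hk0)
  have huJ : ⟪u, J u⟫ = 0 := by
    have hmne : m ^ (k - 1 - 0) ≠ 0 := (pow_pos hm0 _).ne'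
    have h4 : (L ^ 0) u = u := by rw [pow_zero, Module.End.one_apply]
    rw [h4] at hzero
    exact (mul_eq_zero.mp hzero).resolve_left hmne
  have hu0 : u = 0 := by
    by_contra h
    exact (hJpos u h).ne' huJ
  have hLωm : L ω = m • ω := by
    have := sub_eq_zero.mp hu0
    exact this
  exact ⟨m, hm0, by rw [← hJL, hLωm, map_smul]⟩
end

section
/- Let Ω ⊆ V be a transitive state space whose inner product ⟪·,·⟫ is GL(Ω)-invariant and whose positive cone V₊ is self-dual with respect to ⟪·,·⟫, and let ω_M be a GL(Ω)-invariant state with ‖ω_M‖ = 1 and ⟪ω_M, ω⟫ = 1 for all ω ∈ Ω. Let F = (f₀, f₁) and G = (g₀, g₁) be two-outcome ideal measurements, let λ ∈ [0,1], and suppose the fuzzy measurements F̃^λ := (λ f₀ + ((1−λ)/2) ω_M, λ f₁ + ((1−λ)/2) ω_M) and G̃^λ (defined analogously from G) are jointly measurable, i.e. there is a measurement (m_{ij})_{i,j∈{0,1}} with ∑_j m_{ij} = λ f_i + ((1−λ)/2) ω_M for each i and ∑_i m_{ij} = λ g_j + ((1−λ)/2) ω_M for each j. Then there exists a state ω ∈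 Ω such that λ ≤ max(⟪f₀, ω⟫, ⟪f₁, ω⟫) + max(⟪g₀, ω⟫, ⟪g₁, ω⟫) − 1. -/
open RealInnerProductSpace

variable {V : Type*} [NormedAddCommGroup V] [InnerProductSpace ℝ V] [FiniteDimensional ℝ V]

/-- **Eq. (37) of the paper.** In a transitive, self-dual GPT, if the fuzzy versions
`F̃^λ, G̃^λ` of two two-outcome ideal measurements are jointly measurable, then `λ` is
bounded by `max_i ⟪f_i, ω⟫ + max_j ⟪g_j, ω⟫ - 1` for some state `ω`. -/
theorem degree_of_incompatibility_bound
    {V : Type*} [NormedAddCommGroup V] [InnerProductSpace ℝ V] [FiniteDimensional ℝ V]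
    {Ω : Set V} (hΩ : IsStateSpace Ω) (htrans : IsTransitive Ω)
    (hinv : InvariantInner Ω) (hsd : SelfDualCone Ω)
    {ωM : V} (hωMΩ : ωM ∈ Ω) (hωMfix : ∀ T ∈ autGroup Ω, T ωM = ωM)
    (hωMnorm : ‖ωM‖ = 1) (hωMunit : ∀ ω ∈ Ω, ⟪ωM, ω⟫ = 1)
    {f g : Fin 2 → V} (hF : IsIdeal Ω ωM f) (hG : IsIdeal Ω ωM g)
    {l : ℝ} (hl : l ∈ Set.Icc (0 : ℝ) 1)
    {m : Fin 2 × Fin 2 → V} (hM : IsMeasurement Ω ωM m)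
    (hmargF : ∀ i : Fin 2, margF m i = l • f i + ((1 - l) / 2) • ωM)
    (hmargG : ∀ j : Fin 2, margG m j = l • g j + ((1 - l) / 2) • ωM) :
    ∃ ω ∈ Ω, l ≤ max ⟪f 0, ω⟫ ⟪f 1, ω⟫ + max ⟪g 0, ω⟫ ⟪g 1, ω⟫ - 1 := by
  by_contra hcon
  push_neg at hcon
  -- basic cone facts
  have hsd' : posCone Ω = {y : V | ∀ x ∈ posCone Ω, 0 ≤ ⟪x, y⟫} := hsd
  have stateCone : ∀ ω ∈ Ω, ω ∈ posCone Ω :=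
    fun ω h => ⟨1, ω, h, zero_le_one, (one_smul ℝ ω).symm⟩
  have coneNN : ∀ x ∈ posCone Ω, ∀ y ∈ posCone Ω, 0 ≤ ⟪x, y⟫ := by
    intro x hx y hy
    rw [hsd'] at hy
    exact hy x hx
  have effCone : ∀ e : V, IsEffect Ω e → e ∈ posCone Ω := by
    intro e he
    rw [hsd']
    rintro x ⟨κ, ω, hω, hκ, rfl⟩
    rw [real_inner_smul_left]
    exact mul_nonneg hκ (by rw [real_inner_comm]; exact (he ω hω).1)
  have huu : ⟪ωM, ωM⟫ = (1 : ℝ) := by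
    rw [real_inner_self_eq_norm_sq, hωMnorm]; norm_num
  -- key "idempotency" lemma for ideal effects
  have idem0 : ∀ e e' : V, IsEffect Ω e → IsEffect Ω e' → e + e' = ωM →
      (∃ c : ℝ, 0 < c ∧ (∀ ω ∈ Set.extremePoints ℝ Ω, ‖ω‖ = c) ∧
        ∃ S : Finset V, ↑S ⊆ Set.extremePoints ℝ Ω ∧ e = (c ^ 2)⁻¹ • ∑ ω' ∈ S, ω') →
      ⟪e, e⟫ = ⟪ωM, e⟫ := by
    rintro e e' he he' hsum ⟨c, hc, hext, S, hS, heq⟩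
    have hc2 : (0 : ℝ) < c ^ 2 := by positivity
    have hle : ⟪e, e⟫ ≤ ⟪ωM, e⟫ := by
      have h1 : 0 ≤ ⟪e', e⟫ := coneNN _ (effCone _ he') _ (effCone _ he)
      have h2 : ⟪ωM, e⟫ = ⟪e, e⟫ + ⟪e', e⟫ := by rw [← hsum, inner_add_left]
      linarith
    have hextΩ : ∀ x ∈ S, x ∈ Ω := fun x hx => extremePoints_subset (hS hx)
    have hcard : ⟪ωM, e⟫ = (c ^ 2)⁻¹ * S.card := by
      rw [heq, real_inner_smul_right, inner_sum,
        Finset.sum_congr rfl (fun x hx => hωMunit x (hextΩ x hx))]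
      simp
    have hee : ⟪e, e⟫ = (c ^ 2)⁻¹ * ((c ^ 2)⁻¹ * ∑ x ∈ S, ∑ y ∈ S, ⟪x, y⟫) := by
      rw [heq, real_inner_smul_left, real_inner_smul_right]
      congr 2
      rw [sum_inner]
      exact Finset.sum_congr rfl (fun x _ => inner_sum _ _ _)
    have hbound : (S.card : ℝ) * c ^ 2 ≤ ∑ x ∈ S, ∑ y ∈ S, ⟪x, y⟫ := by
      have hdiag : (S.card : ℝ) * c ^ 2 = ∑ x ∈ S, ⟪x, x⟫ := by
        rw [Finset.sum_congr rfl
          (fun x hx => by rw [real_inner_self_eq_norm_sq, hext x (hS hx)])]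
        simp [mul_comm]
      rw [hdiag]
      exact Finset.sum_le_sum (fun x hx =>
        Finset.single_le_sum (fun y hy =>
          coneNN _ (stateCone _ (hextΩ x hx)) _ (stateCone _ (hextΩ y hy))) hx)
    have hge : ⟪ωM, e⟫ ≤ ⟪e, e⟫ := by
      rw [hcard, hee]
      have h6 : (c ^ 2)⁻¹ * (S.card : ℝ) =
          (c ^ 2)⁻¹ * ((c ^ 2)⁻¹ * ((S.card : ℝ) * c ^ 2)) := by
        rw [mul_comm (S.card : ℝ) (c ^ 2), inv_mul_cancel_left₀ (ne_of_gt hc2)]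
      rw [h6]
      exact mul_le_mul_of_nonneg_left
        (mul_le_mul_of_nonneg_left hbound (by positivity)) (by positivity)
    linarith
  -- ⟪f 0, f 0⟫ = ⟪ωM, f 0⟫ for ideal two-outcome measurements
  have hidem : ∀ h : Fin 2 → V, IsIdeal Ω ωM h → ⟪h 0, h 0⟫ = ⟪ωM, h 0⟫ := by
    rintro h ⟨⟨heff, hsum⟩, c, hc, hext, hax⟩
    have hsum2 : h 0 + h 1 = ωM := by rwa [Fin.sum_univ_two] at hsum
    obtain ⟨S, hS, hcase | hcase⟩ := hax 0
    · exact idem0 (h 0) (h 1) (heff 0).2 (heff 1).2 hsum2 ⟨c, hc, hext, S, hS, hcase⟩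
    · have hz : h 1 = (c ^ 2)⁻¹ • ∑ ω' ∈ S, ω' := by
        have h10 : h 1 = ωM - h 0 := by rw [← hsum2]; abel
        rw [h10, hcase]; abel
      have h1idem : ⟪h 1, h 1⟫ = ⟪ωM, h 1⟫ :=
        idem0 (h 1) (h 0) (heff 1).2 (heff 0).2 (by rw [add_comm]; exact hsum2)
          ⟨c, hc, hext, S, hS, hz⟩
      have h01 : h 0 = ωM - h 1 := by rw [← hsum2]; abel
      rw [h01]
      simp only [inner_sub_left, inner_sub_right, huu]
      rw [real_inner_comm (h 1) ωM] at h1idem ⊢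
      linarith
  have hf00 : ⟪f 0, f 0⟫ = ⟪ωM, f 0⟫ := hidem f hF
  have hg00 : ⟪g 0, g 0⟫ = ⟪ωM, g 0⟫ := hidem g hG
  have hfsum : f 0 + f 1 = ωM := by
    have := hF.1.2; rwa [Fin.sum_univ_two] at this
  have hgsum : g 0 + g 1 = ωM := by
    have := hG.1.2; rwa [Fin.sum_univ_two] at this
  -- strict bounds at every state
  have hd : ∀ ω ∈ Ω, |⟪f 0 + g 0 - ωM, ω⟫| < l ∧ |⟪f 0 - g 0, ω⟫| < l := by
    intro ω hω
    have hc := hcon ω hω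
    have hf1 : ⟪f 1, ω⟫ = 1 - ⟪f 0, ω⟫ := by
      have h10 : f 1 = ωM - f 0 := by rw [← hfsum]; abel
      rw [h10, inner_sub_left, hωMunit ω hω]
    have hg1 : ⟪g 1, ω⟫ = 1 - ⟪g 0, ω⟫ := by
      have h10 : g 1 = ωM - g 0 := by rw [← hgsum]; abel
      rw [h10, inner_sub_left, hωMunit ω hω]
    have m0f := le_max_left ⟪f 0, ω⟫ ⟪f 1, ω⟫
    have m1f := le_max_right ⟪f 0, ω⟫ ⟪f 1, ω⟫
    have m0g := le_max_left ⟪g 0, ω⟫ ⟪g 1, ω⟫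
    have m1g := le_max_right ⟪g 0, ω⟫ ⟪g 1, ω⟫
    constructor <;> rw [abs_lt] <;>
      simp only [inner_sub_left, inner_add_left, hωMunit ω hω] <;>
      constructor <;> linarith
  have hl0 : 0 < l := lt_of_le_of_lt (abs_nonneg _) (hd ωM hωMΩ).1
  -- decompose the joint measurement effects
  have hmdec : ∀ q : Fin 2 × Fin 2, ∃ κ : ℝ, ∃ ω ∈ Ω, 0 < κ ∧ m q = κ • ω := by
    intro q
    obtain ⟨κ, ω, hω, hκ, heq⟩ := effCone (m q) (hM.1 q).2
    refine ⟨κ, ω, hω, ?_, heq⟩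
    rcases hκ.lt_or_eq with h | h
    · exact h
    · exact absurd (by rw [heq, ← h, zero_smul]) (hM.1 q).1
  obtain ⟨κ00, ω00, hω00, hκ00, hm00⟩ := hmdec (0, 0)
  obtain ⟨κ01, ω01, hω01, hκ01, hm01⟩ := hmdec (0, 1)
  obtain ⟨κ10, ω10, hω10, hκ10, hm10⟩ := hmdec (1, 0)
  obtain ⟨κ11, ω11, hω11, hκ11, hm11⟩ := hmdec (1, 1)
  -- marginal identities
  have hsumM : m (0, 0) + m (0, 1) + m (1, 0) + m (1, 1) = ωM := by
    have h := hM.2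
    rw [Fintype.sum_prod_type, Fin.sum_univ_two, Fin.sum_univ_two, Fin.sum_univ_two] at h
    rw [← h]; abel
  have hmF0 : m (0, 0) + m (0, 1) = l • f 0 + ((1 - l) / 2) • ωM := by
    have h := hmargF 0
    simp only [margF, Fin.sum_univ_two] at h
    exact h
  have hmG0 : m (0, 0) + m (1, 0) = l • g 0 + ((1 - l) / 2) • ωM := by
    have h := hmargG 0
    simp only [margG, Fin.sum_univ_two] at h
    exact h
  have hA : m (0, 0) - m (1, 1) = l • (f 0 + g 0 - ωM) := by
    have e1 : m (0, 0) - m (1, 1) = (m (0, 0) + m (0, 1)) + (m (0, 0) + m (1, 0)) -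
        (m (0, 0) + m (0, 1) + m (1, 0) + m (1, 1)) := by abel
    rw [e1, hsumM, hmF0, hmG0]
    module
  have hB : m (0, 1) - m (1, 0) = l • (f 0 - g 0) := by
    have e2 : m (0, 1) - m (1, 0) = (m (0, 0) + m (0, 1)) - (m (0, 0) + m (1, 0)) := by abel
    rw [e2, hmF0, hmG0]
    module
  -- norm identity
  have hd1d2 : ⟪f 0 - g 0, f 0 - g 0⟫ + ⟪f 0 + g 0 - ωM, f 0 + g 0 - ωM⟫ = 1 := by
    have c1 : ⟪f 0, ωM⟫ = ⟪ωM, f 0⟫ := real_inner_comm _ _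
    have c2 : ⟪g 0, ωM⟫ = ⟪ωM, g 0⟫ := real_inner_comm _ _
    have c3 : ⟪g 0, f 0⟫ = ⟪f 0, g 0⟫ := real_inner_comm _ _
    simp only [inner_sub_left, inner_sub_right, inner_add_left, inner_add_right]
    linarith
  -- the contradiction
  have hx : l = ⟪f 0 + g 0 - ωM, m (0, 0) - m (1, 1)⟫ +
      ⟪f 0 - g 0, m (0, 1) - m (1, 0)⟫ := by
    rw [hA, hB, real_inner_smul_right, real_inner_smul_right]
    linear_combination (-l) * hd1d2
  rw [inner_sub_right, inner_sub_right, hm00, hm01, hm10, hm11,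
    real_inner_smul_right, real_inner_smul_right, real_inner_smul_right,
    real_inner_smul_right] at hx
  have hκsum : κ00 + κ01 + κ10 + κ11 = 1 := by
    have h := congrArg (fun x => ⟪ωM, x⟫) hsumM
    simp only [inner_add_right, hm00, hm01, hm10, hm11, real_inner_smul_right,
      hωMunit ω00 hω00, hωMunit ω01 hω01, hωMunit ω10 hω10, hωMunit ω11 hω11,
      huu, mul_one] at h
    linarith
  have b00 := (abs_lt.mp (hd ω00 hω00).1).2
  have b11 := (abs_lt.mp (hd ω11 hω11).1).1
  have b01 := (abs_lt.mp (hd ω01 hω01).2).2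
  have b10 := (abs_lt.mp (hd ω10 hω10).2).1
  have t00 : κ00 * ⟪f 0 + g 0 - ωM, ω00⟫ < κ00 * l := mul_lt_mul_of_pos_left b00 hκ00
  have t11 : κ11 * (-⟪f 0 + g 0 - ωM, ω11⟫) < κ11 * l :=
    mul_lt_mul_of_pos_left (by linarith) hκ11
  have t01 : κ01 * ⟪f 0 - g 0, ω01⟫ < κ01 * l := mul_lt_mul_of_pos_left b01 hκ01
  have t10 : κ10 * (-⟪f 0 - g 0, ω10⟫) < κ10 * l :=
    mul_lt_mul_of_pos_left (by linarith) hκ10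
  have hktot : κ00 * l + κ01 * l + κ10 * l + κ11 * l = l := by
    have : κ00 * l + κ01 * l + κ10 * l + κ11 * l = (κ00 + κ01 + κ10 + κ11) * l := by ring
    rw [this, hκsum, one_mul]
  linarith [t00, t11, t01, t10, hktot, hx]
end
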